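/- Let g₀ > 0 and let F, G : ℝ → ℝ be differentiable with G(0) = F(0) = 0, f = F′, g = G′, g(y) ≥ g₀ for all y, and y·f(y) > 0 for y ≠ 0. Let y solve ÿ + g(y)·ẏ + f(y) = ḋ where d is continuously differentiable. Define ψ(s) = sup_{r∈ℝ} { G(r)·(2s − f(r)) } and V(t) = (ẏ(t) + G(y(t)))² + 4F(y(t)) + ẏ(t)². Then d/dt V(t) ≤ −f(y(t))·G(y(t)) − g₀·ẏ(t)² + ψ(ḋ(t)) + 4·ḋ(t)²/g₀ for all t. -/

import Mathlib

theorem stmt_11 (g0 : ℝ) (hg0 : 0 < g0) (F G f g : ℝ → ℝ)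
    (hF0 : F 0 = 0) (hG0 : G 0 = 0)
    (hF : ∀ r, HasDerivAt F (f r) r) (hG : ∀ r, HasDerivAt G (g r) r)
    (hg : ∀ r, g0 ≤ g r) (hf : ∀ r, r ≠ 0 → 0 < r * f r)
    (y y' y'' d d' : ℝ → ℝ)
    (hy : ∀ t, HasDerivAt y (y' t) t)
    (hy' : ∀ t, HasDerivAt y' (y'' t) t)
    (hd : ∀ t, HasDerivAt d (d' t) t)
    (hode : ∀ t, y'' t + g (y t) * y' t + f (y t) = d' t)
    (hψ : ∀ s : ℝ, BddAbove (Set.range fun r => G r * (2 * s - f r))) :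
    ∀ t, 0 ≤ t →
      deriv (fun s => (y' s + G (y s)) ^ 2 + 4 * F (y s) + (y' s) ^ 2) t
        ≤ -(f (y t) * G (y t)) - g0 * (y' t) ^ 2
          + (⨆ r : ℝ, G r * (2 * d' t - f r)) + 4 * (d' t) ^ 2 / g0 := by
  intro t ht
  have h1 : HasDerivAt (fun s => y' s + G (y s)) (y'' t + g (y t) * y' t) t :=
    (hy' t).add ((hG (y t)).comp t (hy t))
  have h2 : HasDerivAt (fun s => (y' s + G (y s)) ^ 2)
      (2 * (y' t + G (y t)) ^ 1 * (y'' t + g (y t) * y' t)) t := h1.pow 2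
  have h3 : HasDerivAt (fun s => 4 * F (y s)) (4 * (f (y t) * y' t)) t :=
    ((hF (y t)).comp t (hy t)).const_mul 4
  have h4 : HasDerivAt (fun s => (y' s) ^ 2) (2 * (y' t) ^ 1 * y'' t) t := (hy' t).pow 2
  have hV : HasDerivAt (fun s => (y' s + G (y s)) ^ 2 + 4 * F (y s) + (y' s) ^ 2) _ t :=
    (h2.add h3).add h4
  rw [hV.deriv]
  have hsup : G (y t) * (2 * d' t - f (y t)) ≤ ⨆ r : ℝ, G r * (2 * d' t - f r) :=
    le_ciSup (hψ (d' t)) (y t)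
  have hode' := hode t
  have hgy := hg (y t)
  have key : 4 * (y' t * d' t) - g0 * (y' t) ^ 2 ≤ 4 * (d' t) ^ 2 / g0 := by
    rw [le_div_iff₀ hg0]
    nlinarith [sq_nonneg (g0 * y' t - 2 * d' t)]
  have hy2 : y'' t = d' t - g (y t) * y' t - f (y t) := by linarith
  rw [hy2]
  nlinarith [key, hsup, mul_nonneg (sub_nonneg.mpr hgy) (sq_nonneg (y' t))]
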